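/- arXiv:1402.2137 — 2 statements merged into one kernel-verified Lean document; each statement's English description precedes it below -/
import Mathlib

section
/- Let G=(V,A) be a connected digraph with nonnegative integer arc weights ω, let 0 ≤ b ≤ c and k ≥ 1 be integers, fix a vertex ordering ν=(v_1,...,v_n) of G, and let 1 ≤ i ≤ n. Let E_i* = E_i \ E_{i−1}, let φ: E_i×[k] → {0,1,...,c} and S ⊆ [k], and let Y = Σ_{j∈S} Σ_{a∈E_i*} φ(a,j)·ω(a). (i) If there exists a ∈ E_i with Σ_{j∈[k]} φ(a,j) < b or Σ_{j∈[k]} φ(a,j) > c, then χ(E_i,φ,S) = ∞. (ii) Otherwise, χ(E_i,φ,S) = Y + min over all φ': E_{i−1}×[k] → {0,1,...,c} and S' ⊆ [k] satisfying the following three conditions of χ(E_{i−1},φ',S'): (a) φ'(a,j) = φ(a,j) for all a ∈ E_i ∩ E_{i−1} and all j ∈ [k]; (b) for all j ∈ [k], Σ_{a ∈ A⁺(v_i)∩E_{i−1}} φ'(a,j) + Σ_{a ∈ A⁺(v_i)∩E_i} φ(a,j) = Σ_{a ∈ A⁻(v_i)∩E_{i−1}} φ'(a,j) + Σ_{a ∈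 A⁻(v_i)∩E_i} φ(a,j), where A⁺(v_i) and A⁻(v_i) denote the sets of arcs of G leaving and entering v_i; (c) S = S' ∪ {j ∈ [k] : Σ_{a∈E_i*} φ(a,j) > 0}. Here the minimum is taken to be ∞ if no such pair (φ',S') exists. -/
/-!
Statement 12: the recursion for the dynamic-programming quantity χ.  Let G = (V, A) be a
connected digraph with nonnegative integer arc weights ω, let 0 ≤ b ≤ c and k ≥ 1 be
integers, fix a vertex ordering ν = (v_1, ..., v_n) of G, and let 1 ≤ i ≤ n.  Let
E_i* = E_i \ E_{i−1}, let φ : E_i × [k] → {0, ..., c} and S ⊆ [k], and let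
Y = Σ_{j∈S} Σ_{a∈E_i*} φ(a,j)·ω(a).
(i) If there exists a ∈ E_i with Σ_j φ(a,j) < b or Σ_j φ(a,j) > c, then χ(E_i,φ,S) = ∞.
(ii) Otherwise χ(E_i,φ,S) = Y + min over all φ' : E_{i−1} × [k] → {0, ..., c} and
S' ⊆ [k] satisfying (a) φ' = φ on (E_i ∩ E_{i−1}) × [k]; (b) the displayed balance
condition at v_i for every j; (c) S = S' ∪ {j : Σ_{a∈E_i*} φ(a,j) > 0}, of
χ(E_{i−1}, φ', S'), the minimum being ∞ if no such pair (φ', S') exists.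

The vertex ordering is an equivalence `ν : Fin n ≃ V` (`v_i = ν ⟨i-1⟩`); `χ` is defined,
with values in `ℕ∞`, as the infimum of the weights of witnessing tuples of multisets.
-/

/-- The underlying undirected (simple) graph of a digraph. -/
def UGraph {V : Type} (A : Finset (V × V)) : SimpleGraph V :=
  SimpleGraph.fromRel (fun u v => (u, v) ∈ A)

/-- The arc bag `E_i`: arcs of `A` with one endpoint among the first `i` vertices of the
ordering `ν` and the other endpoint among the remaining vertices. -/
def Ebag {V : Type} [DecidableEq V] {n : ℕ} (A : Finset (V × V)) (ν : Fin n ≃ V)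
    (i : ℕ) : Finset (V × V) :=
  A.filter (fun a =>
    (((ν.symm a.1 : ℕ) < i ∧ i ≤ (ν.symm a.2 : ℕ)) ∨
      ((ν.symm a.2 : ℕ) < i ∧ i ≤ (ν.symm a.1 : ℕ))))

/-- `γ(i) = E_0 ∪ E_1 ∪ ... ∪ E_i`: the arcs of `A` with at least one endpoint among the
first `i` vertices of the ordering `ν`. -/
def gam {V : Type} [DecidableEq V] {n : ℕ} (A : Finset (V × V)) (ν : Fin n ≃ V)
    (i : ℕ) : Finset (V × V) :=
  A.filter (fun a => (ν.symm a.1 : ℕ) < i ∨ (ν.symm a.2 : ℕ) < i)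

/-- The dynamic-programming quantity `χ(E_i, φ, S)`: the minimum, over all tuples
`(A_1, ..., A_k)` of multisets of arcs of `γ(i)` satisfying conditions (1)-(4), of the
total weight `Σ_j Σ_{a ∈ A_j} ω(a)`; it is `∞` (`⊤` in `ℕ∞`) if no such tuple exists. -/
noncomputable def chi {V : Type} [Fintype V] [DecidableEq V] {n : ℕ}
    (A : Finset (V × V)) (ω : V × V → ℕ) (b c k : ℕ) (ν : Fin n ≃ V)
    (i : ℕ) (φ : V × V → Fin k → ℕ) (S : Finset (Fin k)) : ℕ∞ :=
  sInf {ρ : ℕ∞ | ∃ M : Fin k → V × V → ℕ,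
    -- the `M j` are multisets of arcs of γ(i)
    (∀ j a, M j a ≠ 0 → a ∈ gam A ν i) ∧
    -- (1) for every a ∈ E_i and j ∈ [k], A_j contains exactly φ(a,j) copies of a
    (∀ a ∈ Ebag A ν i, ∀ j, M j a = φ a j) ∧
    -- (2) every arc of γ(i) occurs between b and c times in A_1 ∪ ... ∪ A_k
    (∀ a ∈ gam A ν i, b ≤ (∑ j, M j a) ∧ (∑ j, M j a) ≤ c) ∧
    -- (3) for every h ≤ i and j ∈ S, v_h is balanced in A_j
    (∀ h : Fin n, (h : ℕ) < i → ∀ j ∈ S,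
      (∑ u, M j (u, ν h)) = ∑ u, M j (ν h, u)) ∧
    -- (4) A_j is non-empty iff j ∈ S
    (∀ j, (∃ a, M j a ≠ 0) ↔ j ∈ S) ∧
    -- (5) ρ is the total weight
    (ρ = ((∑ j, ∑ a, M j a * ω a : ℕ) : ℕ∞))}

section Helpers

variable {V : Type} [Fintype V] [DecidableEq V] {n : ℕ} {A : Finset (V × V)} {ν : Fin n ≃ V}

lemma mem_Ebag' {i : ℕ} {a : V × V} :
    a ∈ Ebag A ν i ↔ a ∈ A ∧
      (((ν.symm a.1 : ℕ) < i ∧ i ≤ (ν.symm a.2 : ℕ)) ∨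
        ((ν.symm a.2 : ℕ) < i ∧ i ≤ (ν.symm a.1 : ℕ))) := Finset.mem_filter

lemma mem_gam' {i : ℕ} {a : V × V} :
    a ∈ gam A ν i ↔ a ∈ A ∧ ((ν.symm a.1 : ℕ) < i ∨ (ν.symm a.2 : ℕ) < i) := Finset.mem_filter

lemma idx_ne (hloop : ∀ v : V, (v, v) ∉ A) {a : V × V} (ha : a ∈ A) :
    (ν.symm a.1 : ℕ) ≠ (ν.symm a.2 : ℕ) := by
  intro h
  have h2 : a.1 = a.2 := ν.symm.injective (Fin.val_injective h)
  have h3 : ((a.1, a.2) : V × V) ∈ A := by simpa using ha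
  rw [h2] at h3
  exact hloop _ h3

lemma Ebag_subset_gam {i : ℕ} : Ebag A ν i ⊆ gam A ν i := by
  intro a ha
  rw [mem_Ebag'] at ha
  rw [mem_gam']
  exact ⟨ha.1, by omega⟩

lemma gam_mono {i : ℕ} : gam A ν (i - 1) ⊆ gam A ν i := by
  intro a ha
  rw [mem_gam'] at ha ⊢
  exact ⟨ha.1, by omega⟩

lemma mem_Estar (hloop : ∀ v : V, (v, v) ∉ A) {i : ℕ} (hi1 : 1 ≤ i) {a : V × V} :
    a ∈ Ebag A ν i \ Ebag A ν (i - 1) ↔ a ∈ A ∧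
      (((ν.symm a.1 : ℕ) = i - 1 ∧ i ≤ (ν.symm a.2 : ℕ)) ∨
        ((ν.symm a.2 : ℕ) = i - 1 ∧ i ≤ (ν.symm a.1 : ℕ))) := by
  rw [Finset.mem_sdiff, mem_Ebag', mem_Ebag']
  by_cases hA : a ∈ A
  · have hne := idx_ne (ν := ν) hloop hA
    simp only [hA, true_and]
    omega
  · simp [hA]

lemma mem_gam_split (hloop : ∀ v : V, (v, v) ∉ A) {i : ℕ} (hi1 : 1 ≤ i) {a : V × V} :
    a ∈ gam A ν i ↔ a ∈ gam A ν (i - 1) ∨ a ∈ Ebag A ν i \ Ebag A ν (i - 1) := by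
  rw [mem_gam', mem_gam', mem_Estar hloop hi1]
  by_cases hA : a ∈ A
  · have hne := idx_ne (ν := ν) hloop hA
    simp only [hA, true_and]
    omega
  · simp [hA]

lemma Estar_not_gam_prev (hloop : ∀ v : V, (v, v) ∉ A) {i : ℕ} (hi1 : 1 ≤ i) {a : V × V}
    (ha : a ∈ Ebag A ν i \ Ebag A ν (i - 1)) : a ∉ gam A ν (i - 1) := by
  rw [mem_Estar hloop hi1] at ha
  intro h
  rw [mem_gam'] at h
  obtain ⟨_, h2⟩ := ha
  obtain ⟨_, h4⟩ := h
  omega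

lemma Estar_not_incident (hloop : ∀ v : V, (v, v) ∉ A) {i : ℕ} (hi1 : 1 ≤ i) {h : Fin n}
    (hh : (h : ℕ) < i - 1) {a : V × V} (ha : a ∈ Ebag A ν i \ Ebag A ν (i - 1)) :
    a.1 ≠ ν h ∧ a.2 ≠ ν h := by
  rw [mem_Estar hloop hi1] at ha
  constructor <;> intro he
  · have : (ν.symm a.1 : ℕ) = (h : ℕ) := by rw [he, Equiv.symm_apply_apply]
    omega
  · have : (ν.symm a.2 : ℕ) = (h : ℕ) := by rw [he, Equiv.symm_apply_apply]
    omega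

lemma Ebag_vi_Estar (hloop : ∀ v : V, (v, v) ∉ A) {i : ℕ} (hi1 : 1 ≤ i) (hv : i - 1 < n)
    {a : V × V} (ha : a ∈ Ebag A ν i)
    (h1 : a.1 = ν ⟨i - 1, hv⟩ ∨ a.2 = ν ⟨i - 1, hv⟩) :
    a ∈ Ebag A ν i \ Ebag A ν (i - 1) := by
  rw [mem_Ebag'] at ha
  rw [mem_Estar hloop hi1]
  rcases h1 with h | h
  · have hx : (ν.symm a.1 : ℕ) = i - 1 := by rw [h, Equiv.symm_apply_apply]
    exact ⟨ha.1, by omega⟩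
  · have hx : (ν.symm a.2 : ℕ) = i - 1 := by rw [h, Equiv.symm_apply_apply]
    exact ⟨ha.1, by omega⟩

lemma sum_univ_fst (v : V) (F : V × V → ℕ) :
    ∑ u : V, F (v, u) = ∑ a ∈ Finset.univ.filter (fun a : V × V => a.1 = v), F a := by
  rw [Finset.sum_filter, Fintype.sum_prod_type]
  rw [Finset.sum_congr rfl (fun x _ =>
    show (∑ y : V, if (x, y).1 = v then F (x, y) else 0) = if x = v then ∑ y, F (v, y) else 0
    from by split <;> simp_all)]
  simp

lemma sum_univ_snd (v : V) (F : V × V → ℕ) :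
    ∑ u : V, F (u, v) = ∑ a ∈ Finset.univ.filter (fun a : V × V => a.2 = v), F a := by
  rw [Finset.sum_filter, Fintype.sum_prod_type_right]
  rw [Finset.sum_congr rfl (fun y _ =>
    show (∑ x : V, if (x, y).2 = v then F (x, y) else 0) = if y = v then ∑ x, F (x, v) else 0
    from by split <;> simp_all)]
  simp

lemma sum_out (hloop : ∀ v : V, (v, v) ∉ A) {i : ℕ} (hi1 : 1 ≤ i) (hv : i - 1 < n)
    (F : V × V → ℕ) (hF : ∀ a, F a ≠ 0 → a ∈ gam A ν i) :
    ∑ u : V, F (ν ⟨i - 1, hv⟩, u)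
      = (∑ a ∈ (Ebag A ν (i - 1)).filter (fun a => a.1 = ν ⟨i - 1, hv⟩), F a)
        + ∑ a ∈ (Ebag A ν i).filter (fun a => a.1 = ν ⟨i - 1, hv⟩), F a := by
  rw [sum_univ_fst]
  have hidx : ∀ a : V × V, a.1 = ν ⟨i - 1, hv⟩ → (ν.symm a.1 : ℕ) = i - 1 := fun a ha => by
    rw [ha, Equiv.symm_apply_apply]
  have hdisj : Disjoint ((Ebag A ν (i - 1)).filter (fun a => a.1 = ν ⟨i - 1, hv⟩))
      ((Ebag A ν i).filter (fun a => a.1 = ν ⟨i - 1, hv⟩)) := by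
    rw [Finset.disjoint_left]
    rintro a h1 h2
    rw [Finset.mem_filter, mem_Ebag'] at h1 h2
    have := hidx a h1.2
    omega
  rw [← Finset.sum_union hdisj]
  apply (Finset.sum_subset ?_ ?_).symm
  · intro a ha
    rw [Finset.mem_union, Finset.mem_filter, Finset.mem_filter, mem_Ebag', mem_Ebag'] at ha
    rw [Finset.mem_filter]
    rcases ha with ⟨⟨_, _⟩, h⟩ | ⟨⟨_, _⟩, h⟩ <;> exact ⟨Finset.mem_univ _, h⟩
  · intro a ha ha'
    by_contra hne
    have hg := hF a hne
    rw [mem_gam'] at hg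
    rw [Finset.mem_filter] at ha
    have h1 := hidx a ha.2
    have h2 := idx_ne (ν := ν) hloop hg.1
    exfalso
    apply ha'
    rw [Finset.mem_union, Finset.mem_filter, Finset.mem_filter, mem_Ebag', mem_Ebag']
    rcases Nat.lt_or_ge (ν.symm a.2 : ℕ) (i - 1) with h | h
    · exact Or.inl ⟨⟨hg.1, by omega⟩, ha.2⟩
    · exact Or.inr ⟨⟨hg.1, by omega⟩, ha.2⟩

lemma sum_in (hloop : ∀ v : V, (v, v) ∉ A) {i : ℕ} (hi1 : 1 ≤ i) (hv : i - 1 < n)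
    (F : V × V → ℕ) (hF : ∀ a, F a ≠ 0 → a ∈ gam A ν i) :
    ∑ u : V, F (u, ν ⟨i - 1, hv⟩)
      = (∑ a ∈ (Ebag A ν (i - 1)).filter (fun a => a.2 = ν ⟨i - 1, hv⟩), F a)
        + ∑ a ∈ (Ebag A ν i).filter (fun a => a.2 = ν ⟨i - 1, hv⟩), F a := by
  rw [sum_univ_snd]
  have hidx : ∀ a : V × V, a.2 = ν ⟨i - 1, hv⟩ → (ν.symm a.2 : ℕ) = i - 1 := fun a ha => by
    rw [ha, Equiv.symm_apply_apply]
  have hdisj : Disjoint ((Ebag A ν (i - 1)).filter (fun a => a.2 = ν ⟨i - 1, hv⟩))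
      ((Ebag A ν i).filter (fun a => a.2 = ν ⟨i - 1, hv⟩)) := by
    rw [Finset.disjoint_left]
    rintro a h1 h2
    rw [Finset.mem_filter, mem_Ebag'] at h1 h2
    have := hidx a h1.2
    omega
  rw [← Finset.sum_union hdisj]
  apply (Finset.sum_subset ?_ ?_).symm
  · intro a ha
    rw [Finset.mem_union, Finset.mem_filter, Finset.mem_filter, mem_Ebag', mem_Ebag'] at ha
    rw [Finset.mem_filter]
    rcases ha with ⟨⟨_, _⟩, h⟩ | ⟨⟨_, _⟩, h⟩ <;> exact ⟨Finset.mem_univ _, h⟩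
  · intro a ha ha'
    by_contra hne
    have hg := hF a hne
    rw [mem_gam'] at hg
    rw [Finset.mem_filter] at ha
    have h1 := hidx a ha.2
    have h2 := idx_ne (ν := ν) hloop hg.1
    exfalso
    apply ha'
    rw [Finset.mem_union, Finset.mem_filter, Finset.mem_filter, mem_Ebag', mem_Ebag']
    rcases Nat.lt_or_ge (ν.symm a.1 : ℕ) (i - 1) with h | h
    · exact Or.inl ⟨⟨hg.1, by omega⟩, ha.2⟩
    · exact Or.inr ⟨⟨hg.1, by omega⟩, ha.2⟩

end Helpers

lemma enat_sInf_mem {s : Set ℕ∞} (hs : s.Nonempty) : sInf s ∈ s := by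
  obtain ⟨m, hm, hmin⟩ := (IsWellFounded.wf (r := ((· < ·) : ℕ∞ → ℕ∞ → Prop))).has_min s hs
  have : sInf s = m := le_antisymm (sInf_le hm) (le_sInf fun x hx => not_lt.1 (hmin x hx))
  rw [this]; exact hm

lemma enat_sInf_mem_of_ne_top {s : Set ℕ∞} (h : sInf s ≠ ⊤) : sInf s ∈ s := by
  rcases Set.eq_empty_or_nonempty s with hs | hs
  · rw [hs, sInf_empty] at h
    exact absurd rfl h
  · exact enat_sInf_mem hs

lemma chi_lower {V : Type} [Fintype V] [DecidableEq V] (A : Finset (V × V))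
    (ω : V × V → ℕ) (hloop : ∀ v : V, (v, v) ∉ A) (b c k : ℕ)
    {n : ℕ} (ν : Fin n ≃ V) (i : ℕ) (hi1 : 1 ≤ i) (hv : i - 1 < n)
    (φ : V × V → Fin k → ℕ) (S : Finset (Fin k)) (T : Set ℕ∞)
    (hT : T = {ρ : ℕ∞ | ∃ (φ' : V × V → Fin k → ℕ) (S' : Finset (Fin k)),
          (∀ a ∈ Ebag A ν (i - 1), ∀ j, φ' a j ≤ c) ∧
          (∀ a ∈ Ebag A ν i ∩ Ebag A ν (i - 1), ∀ j, φ' a j = φ a j) ∧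
          (∀ j : Fin k,
            ((∑ a ∈ (Ebag A ν (i - 1)).filter (fun a => a.1 = ν ⟨i - 1, hv⟩), φ' a j)
              + ∑ a ∈ (Ebag A ν i).filter (fun a => a.1 = ν ⟨i - 1, hv⟩), φ a j)
            = ((∑ a ∈ (Ebag A ν (i - 1)).filter (fun a => a.2 = ν ⟨i - 1, hv⟩), φ' a j)
              + ∑ a ∈ (Ebag A ν i).filter (fun a => a.2 = ν ⟨i - 1, hv⟩), φ a j)) ∧
          (S = S' ∪ Finset.univ.filter
            (fun j => 0 < ∑ a ∈ Ebag A ν i \ Ebag A ν (i - 1), φ a j)) ∧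
          ρ = chi A ω b c k ν (i - 1) φ' S'}) :
    ((∑ j ∈ S, ∑ a ∈ Ebag A ν i \ Ebag A ν (i - 1), φ a j * ω a : ℕ) : ℕ∞) + sInf T
      ≤ chi A ω b c k ν i φ S := by
  classical
  refine le_sInf fun ρ hρ => ?_
  obtain ⟨M, hsupp, h1, h2, h3, h4, h5⟩ := hρ
  set φ' : V × V → Fin k → ℕ := fun a j => M j a with hφ'def
  set S' : Finset (Fin k) :=
    Finset.univ.filter (fun j => ∃ a ∈ gam A ν (i - 1), M j a ≠ 0) with hS'def
  set M' : Fin k → V × V → ℕ := fun j a => if a ∈ gam A ν (i - 1) then M j a else 0 with hM'def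
  have hsupp' : ∀ j a, M' j a ≠ 0 → a ∈ gam A ν (i - 1) := by
    intro j a h
    by_contra hc
    simp [hM'def, hc] at h
  have hM'eq : ∀ a ∈ gam A ν (i - 1), ∀ j, M' j a = M j a := by
    intro a ha j
    simp [hM'def, ha]
  have hS'sub : ∀ j, j ∈ S' → j ∈ S := by
    intro j hj
    simp only [hS'def, Finset.mem_filter] at hj
    obtain ⟨_, a, _, hane⟩ := hj
    exact (h4 j).1 ⟨a, hane⟩
  -- χ(E_{i-1}, φ', S') is at most the weight of M'
  have hchile : chi A ω b c k ν (i - 1) φ' S'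
      ≤ ((∑ j, ∑ a, M' j a * ω a : ℕ) : ℕ∞) := by
    apply sInf_le
    refine ⟨M', hsupp', ?_, ?_, ?_, ?_, rfl⟩
    · intro a ha j
      exact hM'eq a (Ebag_subset_gam ha) j
    · intro a ha
      rw [Finset.sum_congr rfl fun j _ => hM'eq a ha j]
      exact h2 a (gam_mono ha)
    · intro h hh j hj
      have hjS := hS'sub j hj
      have e1 : ∀ u, M' j (u, ν h) = M j (u, ν h) := by
        intro u
        by_cases hz : M j (u, ν h) = 0
        · simp [hM'def, hz]
        · have hg : (u, ν h) ∈ gam A ν (i - 1) := by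
            rw [mem_gam']
            refine ⟨(mem_gam'.1 (hsupp j _ hz)).1, Or.inr ?_⟩
            simpa using hh
          simp [hM'def, hg]
      have e2 : ∀ u, M' j (ν h, u) = M j (ν h, u) := by
        intro u
        by_cases hz : M j (ν h, u) = 0
        · simp [hM'def, hz]
        · have hg : (ν h, u) ∈ gam A ν (i - 1) := by
            rw [mem_gam']
            refine ⟨(mem_gam'.1 (hsupp j _ hz)).1, Or.inl ?_⟩
            simpa using hh
          simp [hM'def, hg]
      rw [Finset.sum_congr rfl fun u _ => e1 u, Finset.sum_congr rfl fun u _ => e2 u]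
      exact h3 h (by omega) j hjS
    · intro j
      simp only [hS'def, Finset.mem_filter]
      simp only [Finset.mem_univ, true_and]
      constructor
      · rintro ⟨a, ha⟩
        have hg := hsupp' j a ha
        rw [hM'eq a hg j] at ha
        exact ⟨a, hg, ha⟩
      · rintro ⟨a, hg, hne⟩
        exact ⟨a, by rw [hM'eq a hg j]; exact hne⟩
  -- (φ', S') is feasible
  have hTmem : chi A ω b c k ν (i - 1) φ' S' ∈ T := by
    rw [hT]
    refine ⟨φ', S', ?_, ?_, ?_, ?_, rfl⟩
    · intro a ha j
      have hgi := gam_mono (Ebag_subset_gam (i := i - 1) ha)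
      have h2a := (h2 a hgi).2
      have hle : M j a ≤ ∑ j', M j' a :=
        Finset.single_le_sum (f := fun j' => M j' a) (fun _ _ => Nat.zero_le _)
          (Finset.mem_univ j)
      exact le_trans hle h2a
    · intro a ha j
      exact h1 a (Finset.mem_inter.1 ha).1 j
    · intro j
      have eφ'1 : ∀ s : Finset (V × V), ∑ a ∈ s, φ' a j = ∑ a ∈ s, M j a :=
        fun s => Finset.sum_congr rfl fun a _ => rfl
      have eφ1 : ∀ s : Finset (V × V), s ⊆ Ebag A ν i →
          ∑ a ∈ s, φ a j = ∑ a ∈ s, M j a :=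
        fun s hs => Finset.sum_congr rfl fun a ha => (h1 a (hs ha) j).symm
      rw [eφ'1, eφ'1, eφ1 _ (Finset.filter_subset _ _), eφ1 _ (Finset.filter_subset _ _)]
      rw [← sum_out hloop hi1 hv (M j) (hsupp j), ← sum_in hloop hi1 hv (M j) (hsupp j)]
      by_cases hj : j ∈ S
      · exact (h3 ⟨i - 1, hv⟩ (show i - 1 < i by omega) j hj).symm
      · have hz : ∀ a, M j a = 0 := by
          intro a
          by_contra hc
          exact hj ((h4 j).1 ⟨a, hc⟩)
        simp [hz]
    · ext j
      simp only [Finset.mem_union, Finset.mem_filter, Finset.mem_univ, true_and, hS'def]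
      constructor
      · intro hjS
        obtain ⟨a, ha⟩ := (h4 j).2 hjS
        rcases (mem_gam_split hloop hi1).1 (hsupp j a ha) with hg | he
        · exact Or.inl ⟨a, hg, ha⟩
        · refine Or.inr (Finset.sum_pos' (fun _ _ => Nat.zero_le _) ⟨a, he, ?_⟩)
          rw [← h1 a (Finset.sdiff_subset he) j]
          exact Nat.pos_of_ne_zero ha
      · rintro (⟨a, _, ha⟩ | hpos)
        · exact (h4 j).1 ⟨a, ha⟩
        · have : ∃ a ∈ Ebag A ν i \ Ebag A ν (i - 1), φ a j ≠ 0 := by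
            by_contra hc
            push_neg at hc
            rw [Finset.sum_eq_zero hc] at hpos
            exact lt_irrefl 0 hpos
          obtain ⟨a, he, hφne⟩ := this
          refine (h4 j).1 ⟨a, ?_⟩
          rw [h1 a (Finset.sdiff_subset he) j]
          exact hφne
  -- the weight of M decomposes as Y plus the weight of M'
  have hnat : (∑ j, ∑ a, M j a * ω a)
      = (∑ j ∈ S, ∑ a ∈ Ebag A ν i \ Ebag A ν (i - 1), φ a j * ω a)
        + ∑ j, ∑ a, M' j a * ω a := by
    have hptsum : ∀ j, ∑ a, M j a * ω a
        = (∑ a, M' j a * ω a) + ∑ a ∈ Ebag A ν i \ Ebag A ν (i - 1), M j a * ω a := by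
      intro j
      have hpt : ∀ a : V × V, M j a * ω a
          = M' j a * ω a + (if a ∈ Ebag A ν i \ Ebag A ν (i - 1) then M j a * ω a else 0) := by
        intro a
        by_cases hg : a ∈ gam A ν (i - 1)
        · have hne : a ∉ Ebag A ν i \ Ebag A ν (i - 1) :=
            fun hc => Estar_not_gam_prev hloop hi1 hc hg
          simp [hM'def, hg, hne]
        · by_cases he : a ∈ Ebag A ν i \ Ebag A ν (i - 1)
          · simp [hM'def, hg, he]
          · have hz : M j a = 0 := by
              by_contra hc
              rcases (mem_gam_split hloop hi1).1 (hsupp j a hc) with h | h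
              exacts [hg h, he h]
            simp [hM'def, hg, he, hz]
      rw [Finset.sum_congr rfl fun a _ => hpt a, Finset.sum_add_distrib]
      congr 1
      rw [Finset.sum_ite_mem, Finset.univ_inter]
    rw [Finset.sum_congr rfl fun j _ => hptsum j, Finset.sum_add_distrib, add_comm]
    congr 1
    have e1 : ∀ j : Fin k, ∑ a ∈ Ebag A ν i \ Ebag A ν (i - 1), M j a * ω a
        = ∑ a ∈ Ebag A ν i \ Ebag A ν (i - 1), φ a j * ω a :=
      fun j => Finset.sum_congr rfl fun a ha => by rw [h1 a (Finset.sdiff_subset ha) j]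
    rw [Finset.sum_congr rfl fun j _ => e1 j]
    refine (Finset.sum_subset (Finset.subset_univ S) fun j _ hj => ?_).symm
    apply Finset.sum_eq_zero
    intro a ha
    have hz : M j a = 0 := by
      by_contra hc
      exact hj ((h4 j).1 ⟨a, hc⟩)
    rw [← h1 a (Finset.sdiff_subset ha) j, hz, zero_mul]
  calc ((∑ j ∈ S, ∑ a ∈ Ebag A ν i \ Ebag A ν (i - 1), φ a j * ω a : ℕ) : ℕ∞) + sInf T
      ≤ ((∑ j ∈ S, ∑ a ∈ Ebag A ν i \ Ebag A ν (i - 1), φ a j * ω a : ℕ) : ℕ∞)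
          + chi A ω b c k ν (i - 1) φ' S' := add_le_add_right (sInf_le hTmem) _
    _ ≤ ((∑ j ∈ S, ∑ a ∈ Ebag A ν i \ Ebag A ν (i - 1), φ a j * ω a : ℕ) : ℕ∞)
          + ((∑ j, ∑ a, M' j a * ω a : ℕ) : ℕ∞) := add_le_add_right hchile _
    _ = ρ := by rw [h5, hnat, Nat.cast_add]

lemma chi_upper {V : Type} [Fintype V] [DecidableEq V] (A : Finset (V × V))
    (ω : V × V → ℕ) (hloop : ∀ v : V, (v, v) ∉ A) (b c k : ℕ)
    {n : ℕ} (ν : Fin n ≃ V) (i : ℕ) (hi1 : 1 ≤ i) (hv : i - 1 < n)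
    (φ : V × V → Fin k → ℕ) (S : Finset (Fin k))
    (hφbc : ∀ a ∈ Ebag A ν i, b ≤ (∑ j, φ a j) ∧ (∑ j, φ a j) ≤ c) (T : Set ℕ∞)
    (hT : T = {ρ : ℕ∞ | ∃ (φ' : V × V → Fin k → ℕ) (S' : Finset (Fin k)),
          (∀ a ∈ Ebag A ν (i - 1), ∀ j, φ' a j ≤ c) ∧
          (∀ a ∈ Ebag A ν i ∩ Ebag A ν (i - 1), ∀ j, φ' a j = φ a j) ∧
          (∀ j : Fin k,
            ((∑ a ∈ (Ebag A ν (i - 1)).filter (fun a => a.1 = ν ⟨i - 1, hv⟩), φ' a j)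
              + ∑ a ∈ (Ebag A ν i).filter (fun a => a.1 = ν ⟨i - 1, hv⟩), φ a j)
            = ((∑ a ∈ (Ebag A ν (i - 1)).filter (fun a => a.2 = ν ⟨i - 1, hv⟩), φ' a j)
              + ∑ a ∈ (Ebag A ν i).filter (fun a => a.2 = ν ⟨i - 1, hv⟩), φ a j)) ∧
          (S = S' ∪ Finset.univ.filter
            (fun j => 0 < ∑ a ∈ Ebag A ν i \ Ebag A ν (i - 1), φ a j)) ∧
          ρ = chi A ω b c k ν (i - 1) φ' S'}) :
    chi A ω b c k ν i φ S
      ≤ ((∑ j ∈ S, ∑ a ∈ Ebag A ν i \ Ebag A ν (i - 1), φ a j * ω a : ℕ) : ℕ∞) + sInf T := by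
  classical
  rcases Set.eq_empty_or_nonempty T with hTe | hTne
  · rw [hTe, sInf_empty, add_top]
    exact le_top
  have hsT : sInf T ∈ T := enat_sInf_mem hTne
  rw [hT] at hsT
  obtain ⟨φ', S', hφ'c, ha', hb', hc', hval⟩ := hsT
  -- it suffices to bound chi by Y + chi(i-1, φ', S')
  rw [hT, hval]
  by_cases htop : chi A ω b c k ν (i - 1) φ' S' = ⊤
  · rw [htop, add_top]
    exact le_top
  have hmem := enat_sInf_mem_of_ne_top htop
  obtain ⟨M', hsupp', h1', h2', h3', h4', h5'⟩ := hmem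
  have hval' : chi A ω b c k ν (i - 1) φ' S' = ((∑ j, ∑ a, M' j a * ω a : ℕ) : ℕ∞) := h5'
  rw [hval']
  -- construct the witness M at level i
  set M : Fin k → V × V → ℕ :=
    fun j a => M' j a + (if a ∈ Ebag A ν i \ Ebag A ν (i - 1) then φ a j else 0) with hMdef
  have hM'0 : ∀ j a, a ∈ Ebag A ν i \ Ebag A ν (i - 1) → M' j a = 0 := by
    intro j a ha
    by_contra hc
    exact Estar_not_gam_prev hloop hi1 ha (hsupp' j a hc)
  have hMeqE : ∀ j a, a ∈ Ebag A ν i \ Ebag A ν (i - 1) → M j a = φ a j := by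
    intro j a ha
    simp only [hMdef]
    rw [if_pos ha, hM'0 j a ha, zero_add]
  have hMeqG : ∀ j a, a ∉ Ebag A ν i \ Ebag A ν (i - 1) → M j a = M' j a := by
    intro j a ha
    simp only [hMdef]
    rw [if_neg ha, add_zero]
  -- condition (1) at level i
  have hcond1 : ∀ a ∈ Ebag A ν i, ∀ j, M j a = φ a j := by
    intro a ha j
    by_cases hprev : a ∈ Ebag A ν (i - 1)
    · have hne : a ∉ Ebag A ν i \ Ebag A ν (i - 1) := by
        rw [Finset.mem_sdiff]
        exact fun h => h.2 hprev
      rw [hMeqG j a hne, h1' a hprev j, ha' a (Finset.mem_inter.2 ⟨ha, hprev⟩) j]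
    · exact hMeqE j a (Finset.mem_sdiff.2 ⟨ha, hprev⟩)
  have hsuppM : ∀ j a, M j a ≠ 0 → a ∈ gam A ν i := by
    intro j a h
    by_cases he : a ∈ Ebag A ν i \ Ebag A ν (i - 1)
    · exact Ebag_subset_gam (Finset.sdiff_subset he)
    · rw [hMeqG j a he] at h
      exact gam_mono (hsupp' j a h)
  have hnat : (∑ j, ∑ a, M j a * ω a)
      = (∑ j ∈ S, ∑ a ∈ Ebag A ν i \ Ebag A ν (i - 1), φ a j * ω a)
        + ∑ j, ∑ a, M' j a * ω a := by
    have hptsum : ∀ j, ∑ a, M j a * ω a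
        = (∑ a, M' j a * ω a) + ∑ a ∈ Ebag A ν i \ Ebag A ν (i - 1), φ a j * ω a := by
      intro j
      have hpt : ∀ a : V × V, M j a * ω a
          = M' j a * ω a + (if a ∈ Ebag A ν i \ Ebag A ν (i - 1) then φ a j * ω a else 0) := by
        intro a
        by_cases he : a ∈ Ebag A ν i \ Ebag A ν (i - 1)
        · rw [hMeqE j a he, hM'0 j a he, if_pos he, zero_mul, zero_add]
        · rw [hMeqG j a he, if_neg he, add_zero]
      rw [Finset.sum_congr rfl fun a _ => hpt a, Finset.sum_add_distrib]
      congr 1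
      rw [Finset.sum_ite_mem, Finset.univ_inter]
    rw [Finset.sum_congr rfl fun j _ => hptsum j, Finset.sum_add_distrib, add_comm]
    congr 1
    refine (Finset.sum_subset (Finset.subset_univ S) fun j _ hj => ?_).symm
    apply Finset.sum_eq_zero
    intro a ha
    have hz : φ a j = 0 := by
      by_contra hcne
      apply hj
      rw [hc']
      refine Finset.mem_union_right _ (Finset.mem_filter.2 ⟨Finset.mem_univ _, ?_⟩)
      exact Finset.sum_pos' (fun _ _ => Nat.zero_le _) ⟨a, ha, Nat.pos_of_ne_zero hcne⟩
    rw [hz, zero_mul]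
  refine le_trans (sInf_le ⟨M, hsuppM, hcond1, ?_, ?_, ?_, rfl⟩)
    (le_of_eq (by rw [hnat, Nat.cast_add]))
  -- condition (2)
  · intro a ha
    rcases (mem_gam_split hloop hi1).1 ha with hg | he
    · have hne : a ∉ Ebag A ν i \ Ebag A ν (i - 1) :=
        fun hc => Estar_not_gam_prev hloop hi1 hc hg
      rw [Finset.sum_congr rfl fun j _ => hMeqG j a hne]
      exact h2' a hg
    · rw [Finset.sum_congr rfl fun j _ => hMeqE j a he]
      exact hφbc a (Finset.sdiff_subset he)
  -- condition (3)
  · intro h hh j hj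
    by_cases hcase : (h : ℕ) < i - 1
    · have e1 : ∀ u, M j (u, ν h) = M' j (u, ν h) := by
        intro u
        refine hMeqG j _ fun hc => ?_
        exact (Estar_not_incident hloop hi1 hcase hc).2 rfl
      have e2 : ∀ u, M j (ν h, u) = M' j (ν h, u) := by
        intro u
        refine hMeqG j _ fun hc => ?_
        exact (Estar_not_incident hloop hi1 hcase hc).1 rfl
      rw [Finset.sum_congr rfl fun u _ => e1 u, Finset.sum_congr rfl fun u _ => e2 u]
      by_cases hj' : j ∈ S'
      · exact h3' h hcase j hj'
      · have hz : ∀ a, M' j a = 0 := by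
          intro a
          by_contra hcne
          exact hj' ((h4' j).1 ⟨a, hcne⟩)
        simp [hz]
    · have hfin : h = (⟨i - 1, hv⟩ : Fin n) := Fin.ext (show (h : ℕ) = i - 1 by omega)
      subst hfin
      rw [sum_in hloop hi1 hv (M j) (hsuppM j), sum_out hloop hi1 hv (M j) (hsuppM j)]
      have eprev : ∀ s : Finset (V × V), s ⊆ Ebag A ν (i - 1) →
          ∑ a ∈ s, M j a = ∑ a ∈ s, φ' a j := by
        intro s hs
        refine Finset.sum_congr rfl fun a ha => ?_
        have hprev := hs ha
        have hne : a ∉ Ebag A ν i \ Ebag A ν (i - 1) := by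
          rw [Finset.mem_sdiff]
          exact fun hx => hx.2 hprev
        rw [hMeqG j a hne, h1' a hprev j]
      have ecur : ∀ s : Finset (V × V), s ⊆ Ebag A ν i →
          ∑ a ∈ s, M j a = ∑ a ∈ s, φ a j :=
        fun s hs => Finset.sum_congr rfl fun a ha => hcond1 a (hs ha) j
      rw [eprev _ (Finset.filter_subset _ _), ecur _ (Finset.filter_subset _ _),
        eprev _ (Finset.filter_subset _ _), ecur _ (Finset.filter_subset _ _)]
      exact (hb' j).symm
  -- condition (4)
  · intro j
    have hiff : (∃ a, M j a ≠ 0)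
        ↔ (∃ a, M' j a ≠ 0) ∨ ∃ a ∈ Ebag A ν i \ Ebag A ν (i - 1), φ a j ≠ 0 := by
      constructor
      · rintro ⟨a, hane⟩
        by_cases he : a ∈ Ebag A ν i \ Ebag A ν (i - 1)
        · rw [hMeqE j a he] at hane
          exact Or.inr ⟨a, he, hane⟩
        · rw [hMeqG j a he] at hane
          exact Or.inl ⟨a, hane⟩
      · rintro (⟨a, hane⟩ | ⟨a, he, hane⟩)
        · refine ⟨a, fun hc => hane ?_⟩
          have hle : M' j a ≤ M j a := by
            simp only [hMdef]
            exact Nat.le_add_right _ _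
          omega
        · rw [← hMeqE j a he] at hane
          exact ⟨a, hane⟩
    rw [hiff, hc']
    simp only [Finset.mem_union, Finset.mem_filter, Finset.mem_univ, true_and]
    constructor
    · rintro (h | ⟨a, he, hane⟩)
      · exact Or.inl ((h4' j).1 h)
      · exact Or.inr (Finset.sum_pos' (fun _ _ => Nat.zero_le _)
          ⟨a, he, Nat.pos_of_ne_zero hane⟩)
    · rintro (h | hpos)
      · exact Or.inl ((h4' j).2 h)
      · refine Or.inr ?_
        by_contra hcz
        push_neg at hcz
        rw [Finset.sum_eq_zero fun a ha => hcz a ha] at hpos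
        exact lt_irrefl 0 hpos

theorem stmt12 {V : Type} [Fintype V] [DecidableEq V] (A : Finset (V × V))
    (ω : V × V → ℕ) (hloop : ∀ v : V, (v, v) ∉ A) (hconn : (UGraph A).Connected)
    (b c k : ℕ) (hbc : b ≤ c) (hk : 1 ≤ k)
    (n : ℕ) (ν : Fin n ≃ V) (i : ℕ) (hi1 : 1 ≤ i) (hin : i ≤ n)
    (φ : V × V → Fin k → ℕ) (hφ : ∀ a ∈ Ebag A ν i, ∀ j, φ a j ≤ c)
    (S : Finset (Fin k)) :
    -- part (i)
    ((∃ a ∈ Ebag A ν i, (∑ j, φ a j) < b ∨ c < ∑ j, φ a j) →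
      chi A ω b c k ν i φ S = ⊤) ∧
    -- part (ii)
    ((∀ a ∈ Ebag A ν i, b ≤ (∑ j, φ a j) ∧ (∑ j, φ a j) ≤ c) →
      chi A ω b c k ν i φ S =
        -- Y :
        ((∑ j ∈ S, ∑ a ∈ Ebag A ν i \ Ebag A ν (i - 1), φ a j * ω a : ℕ) : ℕ∞) +
        sInf {ρ : ℕ∞ | ∃ (φ' : V × V → Fin k → ℕ) (S' : Finset (Fin k)),
          -- φ' : E_{i-1} × [k] → [0, c]
          (∀ a ∈ Ebag A ν (i - 1), ∀ j, φ' a j ≤ c) ∧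
          -- (a) φ' agrees with φ on E_i ∩ E_{i-1}
          (∀ a ∈ Ebag A ν i ∩ Ebag A ν (i - 1), ∀ j, φ' a j = φ a j) ∧
          -- (b) balance at v_i
          (∀ j : Fin k,
            ((∑ a ∈ (Ebag A ν (i - 1)).filter (fun a => a.1 = ν ⟨i - 1, by omega⟩), φ' a j)
              + ∑ a ∈ (Ebag A ν i).filter (fun a => a.1 = ν ⟨i - 1, by omega⟩), φ a j)
            = ((∑ a ∈ (Ebag A ν (i - 1)).filter (fun a => a.2 = ν ⟨i - 1, by omega⟩), φ' a j)
              + ∑ a ∈ (Ebag A ν i).filter (fun a => a.2 = ν ⟨i - 1, by omega⟩), φ a j)) ∧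
          -- (c) S = S' ∪ {j : Σ_{a ∈ E_i*} φ(a,j) > 0}
          (S = S' ∪ Finset.univ.filter
            (fun j => 0 < ∑ a ∈ Ebag A ν i \ Ebag A ν (i - 1), φ a j)) ∧
          -- the value χ(E_{i-1}, φ', S')
          ρ = chi A ω b c k ν (i - 1) φ' S'}) := by
  
  constructor
  · rintro ⟨a, ha, hab⟩
    refine le_antisymm le_top (le_sInf fun ρ hρ => ?_)
    obtain ⟨M, hsupp, h1, h2, _, _, _⟩ := hρ
    exfalso
    have h2a := h2 a (Ebag_subset_gam ha)
    have heq : ∑ j, M j a = ∑ j, φ a j := Finset.sum_congr rfl fun j _ => h1 a ha j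
    omega
  · intro hbcφ
    exact le_antisymm
      (chi_upper A ω hloop b c k ν i hi1 (by omega) φ S hbcφ _ rfl)
      (chi_lower A ω hloop b c k ν i hi1 (by omega) φ S _ rfl)
end

section
/- Let D be a digraph whose underlying undirected graph is connected and which has at least one vertex v with d⁺(v) ≠ d⁻(v). Construct H from D as follows: add two new vertices x and y together with the arcs xy and yx; for each vertex v of D, add max{d⁻(v)−d⁺(v), 0} parallel arcs from v to x and max{d⁺(v)−d⁻(v), 0} parallel arcs from x to v; finally, subdivide every arc between x and V(D) (replace each such arc by a directed path of length two through a new vertex), so that H has no parallel arcs. Then H is an Euler digraph, and ν₀(H) = ν₀(D) + 1, where ν₀ denotes the maximum number of pairwise vertex-disjoint directed cycles. -/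
/-!
Statement 13: Let D be a connected digraph with at least one unbalanced vertex.
Construct H from D by adding two new vertices x and y with the arcs xy and yx, adding
max{d⁻(v)−d⁺(v), 0} parallel arcs from v to x and max{d⁺(v)−d⁻(v), 0} parallel arcs from
x to v for each vertex v of D, and finally subdividing every arc between x and V(D).
Then H is an Euler digraph and ν₀(H) = ν₀(D) + 1, where ν₀ is the maximum number of
pairwise vertex-disjoint directed cycles.

A digraph on a vertex type `α` is encoded by its adjacency relation `R : α → α → Prop`
(no loops, no parallel arcs).  Degrees are obtained via `Nat.card`.  The vertex set of
`H` is `V ⊕ (Bool ⊕ (W⁻ ⊕ W⁺))`, where `x = .inr (.inl true)`, `y = .inr (.inl false)`,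
and `W⁻`, `W⁺` are the subdivision vertices of the arcs into and out of `x`.
-/

/-- `L` is the arc list of a directed cycle for the adjacency relation `R`: a non-empty
list of arcs, consecutive head-to-tail, closing up, visiting no vertex twice. -/
def IsCycleR {α : Type} (R : α → α → Prop) (L : List (α × α)) : Prop :=
  L ≠ [] ∧ (∀ p ∈ L, R p.1 p.2) ∧ List.Chain' (fun p q => p.2 = q.1) L ∧
    L.getLast?.map Prod.snd = L.head?.map Prod.fst ∧ (L.map Prod.fst).Nodup

/-- The maximum number of pairwise vertex-disjoint directed cycles. -/
noncomputable def nu0 {α : Type} (R : α → α → Prop) : ℕ :=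
  sSup {k : ℕ | ∃ C : Fin k → List (α × α), (∀ i, IsCycleR R (C i)) ∧
    ∀ i j, i ≠ j → ∀ v ∈ (C i).map Prod.fst, v ∉ (C j).map Prod.fst}

/-- Out-degree of a vertex. -/
noncomputable def outdegR {α : Type} (R : α → α → Prop) (v : α) : ℕ :=
  Nat.card {u // R v u}

/-- In-degree of a vertex. -/
noncomputable def indegR {α : Type} (R : α → α → Prop) (v : α) : ℕ :=
  Nat.card {u // R u v}

/-- The vertex set of `H`: the vertices of `D`, the two new vertices `x` (coded `true`)
and `y` (coded `false`), the subdivision vertices of the `max{d⁻(v)−d⁺(v),0}` arcs from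
`v` to `x`, and the subdivision vertices of the `max{d⁺(v)−d⁻(v),0}` arcs from `x`
to `v`. -/
def HVert (V : Type) (R : V → V → Prop) : Type :=
  V ⊕ (Bool ⊕ ((Σ v : V, Fin (indegR R v - outdegR R v)) ⊕
    (Σ v : V, Fin (outdegR R v - indegR R v))))

/-- The adjacency relation of `H`. -/
def HRel {V : Type} (R : V → V → Prop) : HVert V R → HVert V R → Prop
  | .inl u, .inl v => R u v                               -- the arcs of D
  | .inl u, .inr (.inr (.inl s)) => u = s.1               -- v → (subdivision vertex of a v-to-x arc)
  | .inr (.inr (.inl _)), .inr (.inl b) => b = true       -- (subdivision vertex) → x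
  | .inr (.inl b), .inr (.inr (.inr _)) => b = true       -- x → (subdivision vertex of an x-to-v arc)
  | .inr (.inr (.inr s)), .inl v => s.1 = v               -- (subdivision vertex) → v
  | .inr (.inl b), .inr (.inl b') => (b = true ∧ b' = false) ∨ (b = false ∧ b' = true)
                                                          -- the arcs x → y and y → x
  | _, _ => False

section Deg
variable {V : Type} [Fintype V] (R : V → V → Prop)

instance : Finite (HVert V R) := by unfold HVert; infer_instance

lemma natcard_sigma {f : V → Type} [∀ v, Finite (f v)] :
    Nat.card (Σ v, f v) = ∑ v, Nat.card (f v) := by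
  classical
  letI : ∀ v, Fintype (f v) := fun v => Fintype.ofFinite _
  simp [Nat.card_eq_fintype_card, Fintype.card_sigma]

def outInl (v : V) : {u : HVert V R // HRel R (.inl v) u} ≃
    ({u // R v u} ⊕ Fin (indegR R v - outdegR R v)) where
  toFun := fun p => match p with
    | ⟨.inl u, hu⟩ => .inl ⟨u, hu⟩
    | ⟨.inr (.inr (.inl ⟨w, i⟩)), hu⟩ => .inr ((hu : v = w).symm ▸ i)
  invFun := fun x => match x with
    | .inl ⟨u, hu⟩ => ⟨.inl u, hu⟩
    | .inr i => ⟨.inr (.inr (.inl ⟨v, i⟩)), rfl⟩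
  left_inv := fun p => by
    rcases p with ⟨u, hu⟩
    match u, hu with
    | .inl u, hu => rfl
    | .inr (.inr (.inl ⟨w, i⟩)), hu =>
        have hu' : v = w := hu
        subst hu'
        rfl
  right_inv := fun x => by
    rcases x with ⟨u, hu⟩ | i <;> rfl

def inInl (v : V) : {u : HVert V R // HRel R u (.inl v)} ≃
    ({u // R u v} ⊕ Fin (outdegR R v - indegR R v)) where
  toFun := fun p => match p with
    | ⟨.inl u, hu⟩ => .inl ⟨u, hu⟩
    | ⟨.inr (.inr (.inr ⟨w, i⟩)), hu⟩ => .inr ((hu : w = v) ▸ i)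
  invFun := fun x => match x with
    | .inl ⟨u, hu⟩ => ⟨.inl u, hu⟩
    | .inr i => ⟨.inr (.inr (.inr ⟨v, i⟩)), rfl⟩
  left_inv := fun p => by
    rcases p with ⟨u, hu⟩
    match u, hu with
    | .inl u, hu => rfl
    | .inr (.inr (.inr ⟨w, i⟩)), hu =>
        have hu' : w = v := hu
        subst hu'
        rfl
  right_inv := fun x => by
    rcases x with ⟨u, hu⟩ | i <;> rfl

def outX : {u : HVert V R // HRel R (.inr (.inl true)) u} ≃
    (PUnit.{1} ⊕ (Σ v : V, Fin (outdegR R v - indegR R v))) where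
  toFun := fun p => match p with
    | ⟨.inr (.inl b), hu⟩ => .inl PUnit.unit
    | ⟨.inr (.inr (.inr s)), hu⟩ => .inr s
  invFun := fun x => match x with
    | .inl _ => ⟨.inr (.inl false), Or.inl ⟨rfl, rfl⟩⟩
    | .inr s => ⟨.inr (.inr (.inr s)), rfl⟩
  left_inv := fun p => by
    rcases p with ⟨u, hu⟩
    match u, hu with
    | .inr (.inl b), hu =>
        have hb : b = false := by
          rcases hu with ⟨_, h⟩ | ⟨h, _⟩
          · exact h
          · exact absurd h (by simp)
        subst hb; rfl
    | .inr (.inr (.inr s)), hu => rfl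
  right_inv := fun x => by
    rcases x with u | s <;> rfl

def inX : {u : HVert V R // HRel R u (.inr (.inl true))} ≃
    (PUnit.{1} ⊕ (Σ v : V, Fin (indegR R v - outdegR R v))) where
  toFun := fun p => match p with
    | ⟨.inr (.inl b), hu⟩ => .inl PUnit.unit
    | ⟨.inr (.inr (.inl s)), hu⟩ => .inr s
  invFun := fun x => match x with
    | .inl _ => ⟨.inr (.inl false), Or.inr ⟨rfl, rfl⟩⟩
    | .inr s => ⟨.inr (.inr (.inl s)), rfl⟩
  left_inv := fun p => by
    rcases p with ⟨u, hu⟩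
    match u, hu with
    | .inr (.inl b), hu =>
        have hb : b = false := by
          rcases hu with ⟨h, h2⟩ | ⟨h, _⟩
          · exact absurd h2 (by simp)
          · exact h
        subst hb; rfl
    | .inr (.inr (.inl s)), hu => rfl
  right_inv := fun x => by
    rcases x with u | s <;> rfl

def outY : {u : HVert V R // HRel R (.inr (.inl false)) u} ≃ PUnit.{1} where
  toFun := fun _ => PUnit.unit
  invFun := fun _ => ⟨.inr (.inl true), Or.inr ⟨rfl, rfl⟩⟩
  left_inv := fun p => by
    rcases p with ⟨u, hu⟩
    match u, hu with
    | .inr (.inl b), hu =>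
        have hb : b = true := by
          rcases hu with ⟨h, _⟩ | ⟨_, h⟩
          · exact absurd h (by simp)
          · exact h
        subst hb; rfl
    | .inr (.inr (.inr s)), hu => exact absurd hu (by simp [HRel])
  right_inv := fun _ => rfl

def inY : {u : HVert V R // HRel R u (.inr (.inl false))} ≃ PUnit.{1} where
  toFun := fun _ => PUnit.unit
  invFun := fun _ => ⟨.inr (.inl true), Or.inl ⟨rfl, rfl⟩⟩
  left_inv := fun p => by
    rcases p with ⟨u, hu⟩
    match u, hu with
    | .inr (.inl b), hu =>
        have hb : b = true := by
          rcases hu with ⟨h, _⟩ | ⟨_, h⟩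
          · exact h
          · exact absurd h (by simp)
        subst hb; rfl
    | .inr (.inr (.inl s)), hu => exact absurd hu (by simp [HRel])
  right_inv := fun _ => rfl

def outWm (s : Σ v : V, Fin (indegR R v - outdegR R v)) :
    {u : HVert V R // HRel R (.inr (.inr (.inl s))) u} ≃ PUnit.{1} where
  toFun := fun _ => PUnit.unit
  invFun := fun _ => ⟨.inr (.inl true), rfl⟩
  left_inv := fun p => by
    rcases p with ⟨u, hu⟩
    match u, hu with
    | .inr (.inl b), hu =>
        have hb : b = true := hu
        subst hb; rfl
  right_inv := fun _ => rfl

def inWm (s : Σ v : V, Fin (indegR R v - outdegR R v)) :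
    {u : HVert V R // HRel R u (.inr (.inr (.inl s)))} ≃ PUnit.{1} where
  toFun := fun _ => PUnit.unit
  invFun := fun _ => ⟨.inl s.1, rfl⟩
  left_inv := fun p => by
    rcases p with ⟨u, hu⟩
    match u, hu with
    | .inl w, hu =>
        have hb : w = s.1 := hu
        subst hb; rfl
  right_inv := fun _ => rfl

def outWp (s : Σ v : V, Fin (outdegR R v - indegR R v)) :
    {u : HVert V R // HRel R (.inr (.inr (.inr s))) u} ≃ PUnit.{1} where
  toFun := fun _ => PUnit.unit
  invFun := fun _ => ⟨.inl s.1, rfl⟩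
  left_inv := fun p => by
    rcases p with ⟨u, hu⟩
    match u, hu with
    | .inl w, hu =>
        have hb : s.1 = w := hu
        subst hb; rfl
  right_inv := fun _ => rfl

def inWp (s : Σ v : V, Fin (outdegR R v - indegR R v)) :
    {u : HVert V R // HRel R u (.inr (.inr (.inr s)))} ≃ PUnit.{1} where
  toFun := fun _ => PUnit.unit
  invFun := fun _ => ⟨.inr (.inl true), rfl⟩
  left_inv := fun p => by
    rcases p with ⟨u, hu⟩
    match u, hu with
    | .inr (.inl b), hu =>
        have hb : b = true := hu
        subst hb; rfl
  right_inv := fun _ => rfl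

lemma handshake : ∑ v : V, outdegR R v = ∑ v : V, indegR R v := by
  have e1 : (Σ v : V, {u // R v u}) ≃ {p : V × V // R p.1 p.2} :=
    { toFun := fun ⟨v, u, h⟩ => ⟨(v, u), h⟩
      invFun := fun ⟨p, h⟩ => ⟨p.1, p.2, h⟩
      left_inv := fun ⟨v, u, h⟩ => rfl
      right_inv := fun ⟨⟨v, u⟩, h⟩ => rfl }
  have e2 : (Σ v : V, {u // R u v}) ≃ {p : V × V // R p.1 p.2} :=
    { toFun := fun ⟨v, u, h⟩ => ⟨(u, v), h⟩
      invFun := fun ⟨p, h⟩ => ⟨p.2, p.1, h⟩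
      left_inv := fun ⟨v, u, h⟩ => rfl
      right_inv := fun ⟨⟨v, u⟩, h⟩ => rfl }
  calc ∑ v : V, outdegR R v = Nat.card (Σ v : V, {u // R v u}) := (natcard_sigma).symm
    _ = Nat.card {p : V × V // R p.1 p.2} := Nat.card_congr e1
    _ = Nat.card (Σ v : V, {u // R u v}) := (Nat.card_congr e2).symm
    _ = ∑ v : V, indegR R v := natcard_sigma

lemma sum_tsub_comm (a b : V → ℕ) (h : ∑ v, a v = ∑ v, b v) :
    ∑ v, (a v - b v) = ∑ v, (b v - a v) := by
  have h1 : ∑ v, (a v - b v) + ∑ v, min (a v) (b v) = ∑ v, a v := by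
    rw [← Finset.sum_add_distrib]
    exact Finset.sum_congr rfl (fun v _ => by omega)
  have h2 : ∑ v, (b v - a v) + ∑ v, min (a v) (b v) = ∑ v, b v := by
    rw [← Finset.sum_add_distrib]
    exact Finset.sum_congr rfl (fun v _ => by omega)
  omega

lemma balanced : ∀ w : HVert V R, indegR (HRel R) w = outdegR (HRel R) w := by
  intro w
  have hfin : ∀ v, Nat.card (Fin (indegR R v - outdegR R v)) = indegR R v - outdegR R v := by
    intro v; simp [Nat.card_eq_fintype_card]
  have hfin' : ∀ v, Nat.card (Fin (outdegR R v - indegR R v)) = outdegR R v - indegR R v := by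
    intro v; simp [Nat.card_eq_fintype_card]
  match w with
  | .inl v =>
      have h1 : indegR (HRel R) (.inl v) = indegR R v + (outdegR R v - indegR R v) := by
        erw [indegR, Nat.card_congr (inInl R v), Nat.card_sum, hfin']
        rfl
      have h2 : outdegR (HRel R) (.inl v) = outdegR R v + (indegR R v - outdegR R v) := by
        erw [outdegR, Nat.card_congr (outInl R v), Nat.card_sum, hfin]
        rfl
      rw [h1, h2]; omega
  | .inr (.inl true) =>
      have h1 : indegR (HRel R) (.inr (.inl true)) =
          1 + ∑ v, (indegR R v - outdegR R v) := by
        erw [indegR, Nat.card_congr (inX R), Nat.card_sum, natcard_sigma]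
        simp [hfin]
      have h2 : outdegR (HRel R) (.inr (.inl true)) =
          1 + ∑ v, (outdegR R v - indegR R v) := by
        erw [outdegR, Nat.card_congr (outX R), Nat.card_sum, natcard_sigma]
        simp [hfin']
      rw [h1, h2, sum_tsub_comm _ _ (handshake R).symm]
  | .inr (.inl false) =>
      erw [indegR, outdegR, Nat.card_congr (inY R), Nat.card_congr (outY R)]
  | .inr (.inr (.inl s)) =>
      erw [indegR, outdegR, Nat.card_congr (inWm R s), Nat.card_congr (outWm R s)]
  | .inr (.inr (.inr s)) =>
      erw [indegR, outdegR, Nat.card_congr (inWp R s), Nat.card_congr (outWp R s)]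

end Deg
section Cyc
variable {α : Type} {R : α → α → Prop} {L : List (α × α)}

lemma cyc_snd_mem (h : IsCycleR R L) : ∀ p ∈ L, p.2 ∈ L.map Prod.fst := by
  obtain ⟨hne, -, hch, hcl, -⟩ := h
  intro p hp
  obtain ⟨⟨i, hi⟩, rfl⟩ := List.mem_iff_get.1 hp
  by_cases hlt : i < L.length - 1
  · have := List.isChain_iff_getElem.1 hch i (by omega)
    rw [List.get_eq_getElem, this]
    exact List.mem_map.2 ⟨L.get ⟨i + 1, by omega⟩, List.get_mem _ _, rfl⟩
  · have hi1 : i = L.length - 1 := by omega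
    have hlast : L.getLast hne = L.get ⟨i, hi⟩ := by
      rw [List.getLast_eq_getElem]
      simp [hi1]
    have hcl' : (L.getLast hne).2 = (L.head hne).1 := by
      rw [List.getLast?_eq_getLast hne, List.head?_eq_head hne] at hcl
      exact Option.some.inj (by simpa using hcl)
    rw [← hlast, hcl']
    exact List.mem_map.2 ⟨L.head hne, List.head_mem hne, rfl⟩

lemma cyc_fst_mem (h : IsCycleR R L) : ∀ p ∈ L, ∃ q ∈ L, q.2 = p.1 := by
  obtain ⟨hne, -, hch, hcl, -⟩ := h
  intro p hp
  obtain ⟨⟨i, hi⟩, rfl⟩ := List.mem_iff_get.1 hp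
  rcases Nat.eq_zero_or_pos i with h0 | h0
  · subst h0
    refine ⟨L.getLast hne, List.getLast_mem hne, ?_⟩
    have hcl' : (L.getLast hne).2 = (L.head hne).1 := by
      rw [List.getLast?_eq_getLast hne, List.head?_eq_head hne] at hcl
      exact Option.some.inj (by simpa using hcl)
    rw [hcl']
    congr 1
    rw [← List.get_mk_zero (by omega : 0 < L.length)]
  · have hj : i - 1 < L.length - 1 := by omega
    have := List.isChain_iff_getElem.1 hch (i - 1) (by omega)
    refine ⟨L.get ⟨i - 1, by omega⟩, List.get_mem _ _, ?_⟩
    simp only [List.get_eq_getElem, this, Nat.sub_add_cancel h0]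

end Cyc

section Nu
variable {α : Type} (R : α → α → Prop)

def cycSet : Set ℕ :=
  {k : ℕ | ∃ C : Fin k → List (α × α), (∀ i, IsCycleR R (C i)) ∧
    ∀ i j, i ≠ j → ∀ v ∈ (C i).map Prod.fst, v ∉ (C j).map Prod.fst}

lemma nu0_eq_sSup : nu0 R = sSup (cycSet R) := rfl

lemma zero_mem_cycSet : 0 ∈ cycSet R :=
  ⟨fun i => i.elim0, fun i => i.elim0, fun i => i.elim0⟩

lemma bddAbove_cycSet [Finite α] : BddAbove (cycSet R) := by
  refine ⟨Nat.card α, fun k hk => ?_⟩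
  obtain ⟨C, hC, hdisj⟩ := hk
  have hne : ∀ i, C i ≠ [] := fun i => (hC i).1
  set f : Fin k → α := fun i => ((C i).head (hne i)).1 with hf
  have hmem : ∀ i, f i ∈ (C i).map Prod.fst :=
    fun i => List.mem_map.2 ⟨(C i).head (hne i), List.head_mem _, rfl⟩
  have hinj : Function.Injective f := by
    intro i j hij
    by_contra hne'
    exact hdisj i j hne' (f i) (hmem i) (hij ▸ hmem j)
  calc k = Nat.card (Fin k) := by simp
    _ ≤ Nat.card α := Nat.card_le_card_of_injective f hinj

lemma nu0_mem [Finite α] : nu0 R ∈ cycSet R :=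
  Nat.sSup_mem ⟨0, zero_mem_cycSet R⟩ (bddAbove_cycSet R)

lemma le_nu0 [Finite α] {k : ℕ} (hk : k ∈ cycSet R) : k ≤ nu0 R :=
  le_csSup (bddAbove_cycSet R) hk

lemma nu0_le [Finite α] {m : ℕ} (h : ∀ k ∈ cycSet R, k ≤ m) : nu0 R ≤ m :=
  csSup_le ⟨0, zero_mem_cycSet R⟩ h

end Nu

section Main
variable {V : Type} [Fintype V] (R : V → V → Prop)

/-- lift a list of arcs of D to H -/
def liftL (L : List (V × V)) : List (HVert V R × HVert V R) :=
  L.map (fun p => (Sum.inl p.1, Sum.inl p.2))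

lemma liftL_fst (L : List (V × V)) :
    (liftL R L).map Prod.fst = (L.map Prod.fst).map Sum.inl := by
  simp [liftL, List.map_map]; rfl

lemma lift_cycle {L : List (V × V)} (h : IsCycleR R L) : IsCycleR (HRel R) (liftL R L) := by
  obtain ⟨hne, harc, hch, hcl, hnd⟩ := h
  refine ⟨by simpa [liftL] using hne, ?_, ?_, ?_, ?_⟩
  · intro p hp
    obtain ⟨q, hq, rfl⟩ := List.mem_map.1 hp
    exact harc q hq
  · rw [liftL, List.Chain', List.isChain_map]
    exact hch.imp (fun a b hab => by simp [hab]; rfl)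
  · have := congrArg (Option.map (Sum.inl : V → HVert V R)) hcl
    simp [liftL, List.getLast?_map, List.head?_map, Option.map_map, Function.comp] at this ⊢; exact this
  · rw [liftL_fst]
    exact hnd.map (fun a b h => Sum.inl.inj h)

/-- the 2-cycle through x and y -/
def xyCyc : List (HVert V R × HVert V R) :=
  [(Sum.inr (Sum.inl true), Sum.inr (Sum.inl false)),
   (Sum.inr (Sum.inl false), Sum.inr (Sum.inl true))]

lemma xy_cycle : IsCycleR (HRel R) (xyCyc R) := by
  refine ⟨by simp [xyCyc], ?_, ?_, ?_, ?_⟩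
  · intro p hp
    simp [xyCyc] at hp
    rcases hp with rfl | rfl
    · exact Or.inl ⟨rfl, rfl⟩
    · exact Or.inr ⟨rfl, rfl⟩
  · simp [xyCyc, List.Chain']; rfl
  · rfl
  · refine List.nodup_cons.2 ⟨?_, List.nodup_singleton _⟩
    intro hmem
    simp only [xyCyc, List.mem_singleton, List.map] at hmem
    exact Bool.noConfusion (Sum.inl.inj (Sum.inr.inj (List.mem_singleton.1 hmem)))

lemma xyCyc_fst : (xyCyc R).map Prod.fst =
    [Sum.inr (Sum.inl true), Sum.inr (Sum.inl false)] := rfl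

lemma cyc_avoid {L : List (HVert V R × HVert V R)} (h : IsCycleR (HRel R) L)
    (hx : (Sum.inr (Sum.inl true) : HVert V R) ∉ L.map Prod.fst) :
    ∀ p ∈ L, ∃ u u', p = (Sum.inl u, Sum.inl u') ∧ R u u' := by
  have claim : ∀ p ∈ L, ∃ u : V, p.1 = Sum.inl u := by
    intro p hp
    rcases p with ⟨pa, pb⟩
    have harc := h.2.1 _ hp
    have hmemfst : pa ∈ L.map Prod.fst := List.mem_map.2 ⟨(pa, pb), hp, rfl⟩
    match pa, harc, hmemfst with
    | .inl u, _, _ => exact ⟨u, rfl⟩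
    | .inr (.inl true), harc, hmemfst => exact absurd hmemfst hx
    | .inr (.inl false), harc, hmemfst =>
        exfalso
        have hpb : pb = Sum.inr (Sum.inl true) := by
          match pb, harc with
          | .inl v, harc => exact (harc : False).elim
          | .inr (.inl b'), harc =>
              rcases harc with ⟨h1, _⟩ | ⟨_, h2⟩
              · exact Bool.noConfusion h1
              · rw [show b' = true from h2]
          | .inr (.inr (.inl s)), harc => exact (harc : False).elim
          | .inr (.inr (.inr s)), harc => exact Bool.noConfusion (show false = true from harc)
        have hm := cyc_snd_mem h _ hp
        rw [show ((pa, pb) : HVert V R × HVert V R).2 = pb from rfl, hpb] at hm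
        exact hx hm
    | .inr (.inr (.inl s)), harc, hmemfst =>
        exfalso
        have hpb : pb = Sum.inr (Sum.inl true) := by
          match pb, harc with
          | .inl v, harc => exact (harc : False).elim
          | .inr (.inl b'), harc =>
              have hb : b' = true := harc
              rw [hb]
          | .inr (.inr (.inl s')), harc => exact (harc : False).elim
          | .inr (.inr (.inr s')), harc => exact (harc : False).elim
        have hm := cyc_snd_mem h _ hp
        rw [show ((pa, pb) : HVert V R × HVert V R).2 = pb from rfl, hpb] at hm
        exact hx hm
    | .inr (.inr (.inr s)), harc, hmemfst =>
        exfalso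
        obtain ⟨q, hq, hq2⟩ := cyc_fst_mem h _ hp
        have harcq := h.2.1 _ hq
        rcases q with ⟨qa, qb⟩
        have hq2' : qb = Sum.inr (Sum.inr (Sum.inr s)) := hq2
        subst hq2'
        have hqa : qa = Sum.inr (Sum.inl true) := by
          match qa, harcq with
          | .inl v, harcq => exact (harcq : False).elim
          | .inr (.inl b), harcq =>
              have hb : b = true := harcq
              rw [hb]
          | .inr (.inr (.inl s')), harcq => exact (harcq : False).elim
          | .inr (.inr (.inr s')), harcq => exact (harcq : False).elim
        have : qa ∈ L.map Prod.fst := List.mem_map.2 ⟨_, hq, rfl⟩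
        rw [hqa] at this
        exact hx this
  intro p hp
  obtain ⟨u, hu⟩ := claim p hp
  rcases p with ⟨pa, pb⟩
  have hu' : pa = Sum.inl u := hu
  subst hu'
  have hpb2 : pb ∈ L.map Prod.fst := cyc_snd_mem h _ hp
  have harc := h.2.1 _ hp
  have hpbinl : ∃ u' : V, pb = Sum.inl u' := by
    obtain ⟨q, hq, rfl⟩ := List.mem_map.1 hpb2
    exact claim q hq
  obtain ⟨u', hu'⟩ := hpbinl
  subst hu'
  exact ⟨u, u', rfl, harc⟩

/-- project a list of arcs of H to D -/
def projL (v0 : V) (L : List (HVert V R × HVert V R)) : List (V × V) :=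
  L.map (fun p => (Sum.elim id (fun _ => v0) p.1, Sum.elim id (fun _ => v0) p.2))

lemma proj_cycle (v0 : V) {L : List (HVert V R × HVert V R)} (h : IsCycleR (HRel R) L)
    (hx : (Sum.inr (Sum.inl true) : HVert V R) ∉ L.map Prod.fst) :
    IsCycleR R (projL R v0 L) ∧
    ∀ v : V, v ∈ (projL R v0 L).map Prod.fst → Sum.inl v ∈ L.map Prod.fst := by
  have havoid := cyc_avoid R h hx
  set g : HVert V R → V := Sum.elim id (fun _ => v0) with hg
  have hfst : (projL R v0 L).map Prod.fst = (L.map Prod.fst).map g := by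
    simp [projL, List.map_map, hg]; exact (List.map_map (g := Sum.elim id fun _ => v0) (f := Prod.fst)).symm
  have hallinl : ∀ w ∈ L.map Prod.fst, ∃ u : V, w = Sum.inl u := by
    intro w hw
    obtain ⟨p, hp, rfl⟩ := List.mem_map.1 hw
    obtain ⟨u, u', rfl, -⟩ := havoid p hp
    exact ⟨u, rfl⟩
  obtain ⟨hne, harc, hch, hcl, hnd⟩ := h
  constructor
  · refine ⟨by simpa [projL] using hne, ?_, ?_, ?_, ?_⟩
    · intro p hp
      obtain ⟨q, hq, rfl⟩ := List.mem_map.1 hp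
      obtain ⟨u, u', rfl, hr⟩ := havoid q hq
      exact hr
    · rw [projL, List.Chain', List.isChain_map]
      exact hch.imp (fun a b hab => congrArg g hab)
    · have := congrArg (Option.map g) hcl
      simp [projL, List.getLast?_map, List.head?_map, Option.map_map, Function.comp] at this ⊢; exact this
    · rw [hfst]
      refine hnd.map_on ?_
      intro w hw w' hw' hgw
      obtain ⟨u, rfl⟩ := hallinl w hw
      obtain ⟨u', rfl⟩ := hallinl w' hw'
      simp only [hg, Sum.elim_inl, id] at hgw
      exact congrArg Sum.inl hgw
  · intro v hv
    rw [hfst] at hv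
    obtain ⟨w, hw, hwv⟩ := List.mem_map.1 hv
    obtain ⟨u, rfl⟩ := hallinl w hw
    have huv : u = v := by simpa [hg] using hwv
    subst huv
    exact hw

def inlHom : SimpleGraph.fromRel R →g SimpleGraph.fromRel (HRel R) where
  toFun := Sum.inl
  map_rel' := by
    intro a b hab
    erw [SimpleGraph.fromRel_adj] at hab ⊢
    refine ⟨fun h => hab.1 (Sum.inl.inj h), ?_⟩
    rcases hab.2 with h | h
    · exact Or.inl h
    · exact Or.inr h

lemma Hconn (hconn : (SimpleGraph.fromRel R).Connected)
    (himb : ∃ v, outdegR R v ≠ indegR R v) :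
    (SimpleGraph.fromRel (HRel R)).Connected := by
  obtain ⟨v0, hv0⟩ := himb
  set G := SimpleGraph.fromRel (HRel R) with hG
  have hreach0 : G.Reachable (Sum.inl v0) (Sum.inr (Sum.inl true)) := by
    rcases Nat.lt_or_ge (outdegR R v0) (indegR R v0) with hlt | hge
    · have h1 : G.Adj (Sum.inl v0) (Sum.inr (Sum.inr (Sum.inl ⟨v0, ⟨0, by omega⟩⟩))) :=
        (SimpleGraph.fromRel_adj _ _ _).mpr ⟨Sum.inl_ne_inr, Or.inl rfl⟩
      have h2 : G.Adj (Sum.inr (Sum.inr (Sum.inl (⟨v0, ⟨0, by omega⟩⟩ :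
          Σ v : V, Fin (indegR R v - outdegR R v))))) (Sum.inr (Sum.inl true)) :=
        (SimpleGraph.fromRel_adj _ _ _).mpr
          ⟨(by intro h; cases h), Or.inl rfl⟩
      exact h1.reachable.trans h2.reachable
    · have hlt : indegR R v0 < outdegR R v0 := by omega
      have h1 : G.Adj (Sum.inl v0) (Sum.inr (Sum.inr (Sum.inr ⟨v0, ⟨0, by omega⟩⟩))) :=
        (SimpleGraph.fromRel_adj _ _ _).mpr ⟨Sum.inl_ne_inr, Or.inr rfl⟩
      have h2 : G.Adj (Sum.inr (Sum.inr (Sum.inr (⟨v0, ⟨0, by omega⟩⟩ :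
          Σ v : V, Fin (outdegR R v - indegR R v))))) (Sum.inr (Sum.inl true)) :=
        (SimpleGraph.fromRel_adj _ _ _).mpr
          ⟨(by intro h; cases h), Or.inr rfl⟩
      exact h1.reachable.trans h2.reachable
  have hreach : ∀ w : HVert V R, G.Reachable w (Sum.inr (Sum.inl true)) := by
    intro w
    match w with
    | .inl v =>
        have hr : G.Reachable (Sum.inl v) (Sum.inl v0) :=
          (hconn.preconnected v v0).map (inlHom R)
        exact hr.trans hreach0
    | .inr (.inl true) => exact SimpleGraph.Reachable.refl _
    | .inr (.inl false) =>
        have hadj : G.Adj (Sum.inr (Sum.inl false)) (Sum.inr (Sum.inl true)) :=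
          (SimpleGraph.fromRel_adj _ _ _).mpr
            ⟨fun h => Bool.noConfusion (Sum.inl.inj (Sum.inr.inj h)),
             Or.inl (Or.inr ⟨rfl, rfl⟩)⟩
        exact hadj.reachable
    | .inr (.inr (.inl s)) =>
        have hadj : G.Adj (Sum.inr (Sum.inr (Sum.inl s))) (Sum.inr (Sum.inl true)) :=
          (SimpleGraph.fromRel_adj _ _ _).mpr
            ⟨(by intro h; cases h), Or.inl rfl⟩
        exact hadj.reachable
    | .inr (.inr (.inr s)) =>
        have hadj : G.Adj (Sum.inr (Sum.inr (Sum.inr s))) (Sum.inr (Sum.inl true)) :=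
          (SimpleGraph.fromRel_adj _ _ _).mpr
            ⟨(by intro h; cases h), Or.inr rfl⟩
        exact hadj.reachable
  exact (SimpleGraph.connected_iff _).mpr
    ⟨fun u w => (hreach u).trans (hreach w).symm, ⟨Sum.inr (Sum.inl true)⟩⟩

end Main


theorem stmt13 {V : Type} [Fintype V] [DecidableEq V] (R : V → V → Prop)
    (hloop : ∀ v, ¬ R v v)
    (hconn : (SimpleGraph.fromRel R).Connected)
    (himb : ∃ v, outdegR R v ≠ indegR R v) :
    ((SimpleGraph.fromRel (HRel R)).Connected ∧
      ∀ w : HVert V R, indegR (HRel R) w = outdegR (HRel R) w) ∧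
    nu0 (HRel R) = nu0 R + 1 := by
  obtain ⟨v0, hv0⟩ := himb
  refine ⟨⟨Hconn R hconn ⟨v0, hv0⟩, balanced R⟩, ?_⟩
  have hmemH : nu0 R + 1 ∈ cycSet (HRel R) := by
    obtain ⟨C, hC, hdisj⟩ := nu0_mem R
    refine ⟨Fin.lastCases (xyCyc R) (fun i => liftL R (C i)), ?_, ?_⟩
    · intro i
      induction i using Fin.lastCases with
      | last => simpa using xy_cycle R
      | cast i => simpa using lift_cycle R (hC i)
    · intro i j hij
      induction i using Fin.lastCases with
      | last =>
        induction j using Fin.lastCases with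
        | last => exact absurd rfl hij
        | cast j =>
          simp only [Fin.lastCases_last, Fin.lastCases_castSucc]
          intro v hvi hvj
          rw [liftL_fst] at hvj
          obtain ⟨u, -, rfl⟩ := List.mem_map.1 hvj
          rw [xyCyc_fst] at hvi
          rcases List.mem_pair.1 hvi with h | h <;> cases h
      | cast i =>
        induction j using Fin.lastCases with
        | last =>
          simp only [Fin.lastCases_last, Fin.lastCases_castSucc]
          intro v hvi hvj
          rw [liftL_fst] at hvi
          obtain ⟨u, -, rfl⟩ := List.mem_map.1 hvi
          rw [xyCyc_fst] at hvj
          rcases List.mem_pair.1 hvj with h | h <;> cases h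
        | cast j =>
          simp only [Fin.lastCases_castSucc]
          intro v hvi hvj
          rw [liftL_fst] at hvi hvj
          obtain ⟨u, hui, rfl⟩ := List.mem_map.1 hvi
          obtain ⟨u', huj, heq⟩ := List.mem_map.1 hvj
          have hu : u' = u := Sum.inl.inj heq
          subst hu
          exact hdisj i j (fun h => hij (by rw [h])) u' hui huj
  have hle1 : nu0 R + 1 ≤ nu0 (HRel R) := le_nu0 _ hmemH
  have hub : nu0 (HRel R) ≤ nu0 R + 1 := by
    refine nu0_le _ ?_
    intro k hk
    obtain ⟨C, hC, hdisj⟩ := hk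
    by_cases hex : ∃ i, (Sum.inr (Sum.inl true) : HVert V R) ∈ (C i).map Prod.fst
    · obtain ⟨i0, hi0⟩ := hex
      rcases k with _ | n
      · exact i0.elim0
      · have hxne : ∀ i : Fin n,
            (Sum.inr (Sum.inl true) : HVert V R) ∉ (C (i0.succAbove i)).map Prod.fst :=
          fun i hxin => hdisj _ i0 (Fin.succAbove_ne i0 i) _ hxin hi0
        have hn : n ∈ cycSet R := by
          refine ⟨fun i => projL R v0 (C (i0.succAbove i)),
            fun i => (proj_cycle R v0 (hC _) (hxne i)).1, ?_⟩
          intro i j hij v hvi hvj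
          have h1 := (proj_cycle R v0 (hC _) (hxne i)).2 v hvi
          have h2 := (proj_cycle R v0 (hC _) (hxne j)).2 v hvj
          exact hdisj _ _ (fun h => hij (Fin.succAbove_right_injective h)) _ h1 h2
        have := le_nu0 R hn
        omega
    · push_neg at hex
      have hk' : k ∈ cycSet R := by
        refine ⟨fun i => projL R v0 (C i), fun i => (proj_cycle R v0 (hC i) (hex i)).1, ?_⟩
        intro i j hij v hvi hvj
        exact hdisj i j hij _ ((proj_cycle R v0 (hC i) (hex i)).2 v hvi)
          ((proj_cycle R v0 (hC j) (hex j)).2 v hvj)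
      have := le_nu0 R hk'
      omega
  omega
end
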